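/- Let (A, M, P) be a relative averaging algebra and (N → B (map Q), l, r) a bimodule over it. Then P ⊕ Q : M ⊕ N → A ⊕ B is a relative averaging operator, where A ⊕ B is the semidirect product algebra (a,b)·(a',b') = (a·a', a·b' + b·a') and M ⊕ N is an (A⊕B)-bimodule via (a,b)▷(u,n) = (a·u, a·n + r(b,u)) and (u,n)◁(a,b) = (u·a, l(u,b) + n·a). -/
import Mathlib


/-- An `A`-bimodule structure on `M` over an associative algebra `A`:
left and right actions that are biadditive and associative/compatible. -/
structure ABimodule (A : Type*) (M : Type*) [Ring A] [AddCommGroup M] where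
  lsmul : A → M → M
  rsmul : M → A → M
  lsmul_add : ∀ a u v, lsmul a (u + v) = lsmul a u + lsmul a v
  add_lsmul : ∀ a b u, lsmul (a + b) u = lsmul a u + lsmul b u
  rsmul_add : ∀ u v a, rsmul (u + v) a = rsmul u a + rsmul v a
  add_rsmul : ∀ u a b, rsmul u (a + b) = rsmul u a + rsmul u b
  mul_lsmul : ∀ a b u, lsmul (a * b) u = lsmul a (lsmul b u)
  rsmul_mul : ∀ u a b, rsmul u (a * b) = rsmul (rsmul u a) b
  lsmul_rsmul : ∀ a u b, rsmul (lsmul a u) b = lsmul a (rsmul u b)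

/-- `P : M → A` is a relative averaging operator:
`P(u)·P(v) = P(P(u)·v) = P(u·P(v))`. -/
def IsRelAvgOp {A M : Type*} [Ring A] [AddCommGroup M]
    (ρ : ABimodule A M) (P : M → A) : Prop :=
  ∀ u v : M, P u * P v = P (ρ.lsmul (P u) v) ∧ P u * P v = P (ρ.rsmul u (P v))

/-- A bimodule `(N → B, l, r)` over a relative averaging algebra `(A, M, P)`. -/
structure RAvgBimodule {A M : Type*} [Ring A] [AddCommGroup M]
    (B N : Type*) [AddCommGroup B] [AddCommGroup N]
    (ρM : ABimodule A M) (P : M → A) where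
  ρB : ABimodule A B
  ρN : ABimodule A N
  l : M → B → N
  r : B → M → N
  Q : N → B
  Q_add : ∀ n n', Q (n + n') = Q n + Q n'
  l_addl : ∀ u u' b, l (u + u') b = l u b + l u' b
  l_addr : ∀ u b b', l u (b + b') = l u b + l u b'
  r_addl : ∀ b b' u, r (b + b') u = r b u + r b' u
  r_addr : ∀ b u u', r b (u + u') = r b u + r b u'
  dasm1a : ∀ a u b, l (ρM.lsmul a u) b = ρN.lsmul a (l u b)
  dasm1b : ∀ u a b, l (ρM.rsmul u a) b = l u (ρB.lsmul a b)
  dasm1c : ∀ u b a, l u (ρB.rsmul b a) = ρN.rsmul (l u b) a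
  dasm2a : ∀ a b u, r (ρB.lsmul a b) u = ρN.lsmul a (r b u)
  dasm2b : ∀ b a u, r (ρB.rsmul b a) u = r b (ρM.lsmul a u)
  dasm2c : ∀ b u a, r b (ρM.rsmul u a) = ρN.rsmul (r b u) a
  dasm3a : ∀ u n, ρB.lsmul (P u) (Q n) = Q (ρN.lsmul (P u) n)
  dasm3b : ∀ u n, ρB.lsmul (P u) (Q n) = Q (l u (Q n))
  dasm4a : ∀ n u, ρB.rsmul (Q n) (P u) = Q (r (Q n) u)
  dasm4b : ∀ n u, ρB.rsmul (Q n) (P u) = Q (ρN.rsmul n (P u))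

/-- Semidirect product: for a relative averaging algebra `(A, M, P)`
and a bimodule `(N → B, l, r)` over it, the map `P ⊕ Q : M ⊕ N → A ⊕ B` is a
relative averaging operator for the semidirect product algebra structure on
`A ⊕ B` and the induced `(A ⊕ B)`-bimodule structure on `M ⊕ N`. -/
theorem semidirectProduct_relativeAveraging
    (A M B N : Type*) [Ring A] [AddCommGroup M] [AddCommGroup B] [AddCommGroup N]
    (ρM : ABimodule A M) (P : M → A) (hP : IsRelAvgOp ρM P)
    (W : RAvgBimodule B N ρM P) :
    let prod : A × B → A × B → A × B :=
      fun x y => (x.1 * y.1, W.ρB.lsmul x.1 y.2 + W.ρB.rsmul x.2 y.1)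
    let lact : A × B → M × N → M × N :=
      fun x z => (ρM.lsmul x.1 z.1, W.ρN.lsmul x.1 z.2 + W.r x.2 z.1)
    let ract : M × N → A × B → M × N :=
      fun z x => (ρM.rsmul z.1 x.1, W.l z.1 x.2 + W.ρN.rsmul z.2 x.1)
    let PQ : M × N → A × B := fun z => (P z.1, W.Q z.2)
    ∀ z z' : M × N,
      prod (PQ z) (PQ z') = PQ (lact (PQ z) z') ∧
      prod (PQ z) (PQ z') = PQ (ract z (PQ z')) := by
  intro prod lact ract PQ z z'
  constructor <;>
    refine Prod.ext ?_ ?_ <;>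
    simp only [prod, lact, ract, PQ, W.Q_add]
  · exact (hP z.1 z'.1).1
  · rw [W.dasm3a, W.dasm4a]
  · exact (hP z.1 z'.1).2
  · rw [W.dasm3b, W.dasm4b]
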